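/- Define ξ(s) = φ(s)²/(Q(s)(1-Q(s))) and ζ₀(r) = E[ξ(rS)] for S ~ N(0,1). Then as r → ∞, r·ζ₀(r) converges to A₀ := (2π)^{-1/2} ∫_{-∞}^{∞} ξ(u) du, and this integral is finite. -/

import Mathlib

open Real MeasureTheory Filter

/-- Standard normal density. -/
noncomputable def phi (t : ℝ) : ℝ := (Real.sqrt (2 * π))⁻¹ * Real.exp (-t ^ 2 / 2)

/-- Gaussian tail function `Q(x) = ∫_x^∞ φ`. -/
noncomputable def Qtail (x : ℝ) : ℝ := ∫ t in Set.Ioi x, phi t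

noncomputable def xi (s : ℝ) : ℝ := (phi s) ^ 2 / (Qtail s * (1 - Qtail s))

/-- `ζ₀(r) = E[ξ(rS)]`, `S ~ N(0,1)`. -/
noncomputable def zeta0 (r : ℝ) : ℝ := ∫ s, xi (r * s) ∂(ProbabilityTheory.gaussianReal 0 1)

lemma phi_pos (t : ℝ) : 0 < phi t := by
  unfold phi
  have : (0:ℝ) < Real.sqrt (2 * π) := Real.sqrt_pos.2 (by positivity)
  positivity

lemma phi_cont : Continuous phi := by
  unfold phi
  fun_prop

lemma phi_eq_pdf : phi = ProbabilityTheory.gaussianPDFReal 0 1 := by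
  funext x
  simp [phi, ProbabilityTheory.gaussianPDFReal]

lemma integrable_phi : Integrable phi := by
  rw [phi_eq_pdf]; exact ProbabilityTheory.integrable_gaussianPDFReal 0 1

lemma integral_phi : ∫ t, phi t = 1 := by
  rw [phi_eq_pdf]; exact ProbabilityTheory.integral_gaussianPDFReal_eq_one 0 one_ne_zero

lemma phi_even (t : ℝ) : phi (-t) = phi t := by simp [phi]

lemma phi_le (t : ℝ) : phi t ≤ (Real.sqrt (2 * π))⁻¹ := by
  unfold phi
  have h : Real.exp (-t ^ 2 / 2) ≤ 1 := by
    rw [Real.exp_le_one_iff]; nlinarith [sq_nonneg t]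
  have h2 : (0:ℝ) ≤ (Real.sqrt (2 * π))⁻¹ := by positivity
  calc (Real.sqrt (2 * π))⁻¹ * Real.exp (-t ^ 2 / 2) ≤ (Real.sqrt (2 * π))⁻¹ * 1 :=
        mul_le_mul_of_nonneg_left h h2
    _ = (Real.sqrt (2 * π))⁻¹ := mul_one _

lemma phi_anti {a b : ℝ} (ha : 0 ≤ a) (hab : a ≤ b) : phi b ≤ phi a := by
  unfold phi
  have : Real.exp (-b ^ 2 / 2) ≤ Real.exp (-a ^ 2 / 2) := by
    apply Real.exp_le_exp.2; nlinarith
  have h : (0:ℝ) < Real.sqrt (2 * π) := Real.sqrt_pos.2 (by positivity)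
  have h2 : (0:ℝ) ≤ (Real.sqrt (2 * π))⁻¹ := by positivity
  nlinarith

lemma Qtail_split {a b : ℝ} (h : a ≤ b) :
    Qtail a = (∫ t in Set.Ioc a b, phi t) + Qtail b := by
  unfold Qtail
  rw [← setIntegral_union (Set.Ioc_disjoint_Ioi le_rfl) measurableSet_Ioi
    integrable_phi.integrableOn integrable_phi.integrableOn, Set.Ioc_union_Ioi_eq_Ioi h]

lemma Qtail_pos (x : ℝ) : 0 < Qtail x := by
  unfold Qtail
  rw [setIntegral_pos_iff_support_of_nonneg_ae (ae_of_all _ fun t => (phi_pos t).le)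
    integrable_phi.integrableOn]
  have hs : Function.support phi = Set.univ := by
    ext t; simp [Function.mem_support, (phi_pos t).ne']
  rw [hs, Set.univ_inter, Real.volume_Ioi]
  simp

lemma Qtail_neg (x : ℝ) : Qtail (-x) = 1 - Qtail x := by
  have h1 : Qtail (-x) = ∫ t in Set.Iic x, phi t := by
    unfold Qtail
    have := integral_comp_neg_Ioi (-x) phi
    rw [neg_neg] at this
    rw [← this]
    exact setIntegral_congr_fun measurableSet_Ioi fun t _ => (phi_even t).symm
  have h2 : (∫ t in Set.Iic x, phi t) + Qtail x = 1 := by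
    unfold Qtail
    rw [intervalIntegral.integral_Iic_add_Ioi integrable_phi.integrableOn integrable_phi.integrableOn]
    exact integral_phi
  linarith

lemma Qtail_zero : Qtail 0 = 1/2 := by
  have := Qtail_neg 0
  rw [neg_zero] at this
  linarith

lemma Qtail_lt_one (x : ℝ) : Qtail x < 1 := by
  have := Qtail_neg x
  have := Qtail_pos (-x)
  linarith

lemma Qtail_le_half {x : ℝ} (hx : 0 ≤ x) : Qtail x ≤ 1/2 := by
  have h := Qtail_split hx
  have h2 : 0 ≤ ∫ t in Set.Ioc 0 x, phi t :=
    setIntegral_nonneg measurableSet_Ioc fun t _ => (phi_pos t).le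
  rw [Qtail_zero] at h
  linarith

lemma Qtail_lb {x : ℝ} (hx : 1 ≤ x) : Real.exp (-(3/2)) * phi x / x ≤ Qtail x := by
  have hx0 : 0 < x := lt_of_lt_of_le one_pos hx
  have hxinv : 0 < 1/x := by positivity
  have hsplit := Qtail_split (le_add_of_nonneg_right hxinv.le : x ≤ x + 1/x)
  have hQ2 : 0 ≤ Qtail (x + 1/x) := (Qtail_pos _).le
  have hvol : (volume (Set.Ioc x (x + 1/x))).toReal = 1/x := by
    rw [Real.volume_Ioc, ENNReal.toReal_ofReal (by linarith)]
    ring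
  have hlb : phi (x + 1/x) * (volume (Set.Ioc x (x + 1/x))).toReal
      ≤ ∫ t in Set.Ioc x (x + 1/x), phi t := by
    refine setIntegral_ge_of_const_le_real measurableSet_Ioc ?_
      (fun t ht => phi_anti (by nlinarith [ht.1]) ht.2) integrable_phi.integrableOn
    · rw [Real.volume_Ioc]; exact ENNReal.ofReal_ne_top
  have key : Real.exp (-(3/2)) * phi x ≤ phi (x + 1/x) := by
    unfold phi
    rw [← mul_assoc, mul_comm (Real.exp (-(3/2))), mul_assoc, ← Real.exp_add]
    have hsq : (1/x)^2 ≤ 1 := by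
      rw [div_pow, one_pow]
      rw [div_le_one (by positivity)]
      nlinarith
    have hxx : x * (1/x) = 1 := mul_one_div_cancel hx0.ne'
    have harg : -(3/2) + -x ^ 2 / 2 ≤ -(x + 1/x) ^ 2 / 2 := by nlinarith
    have := Real.exp_le_exp.2 harg
    have h0 : (0:ℝ) ≤ (Real.sqrt (2 * π))⁻¹ := by positivity
    exact mul_le_mul_of_nonneg_left this h0
  rw [hvol] at hlb
  have : Real.exp (-(3/2)) * phi x / x ≤ phi (x + 1/x) * (1/x) := by
    rw [div_eq_mul_one_div]
    exact mul_le_mul_of_nonneg_right key hxinv.le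
  linarith

lemma Qtail_eq (x : ℝ) : Qtail x = Qtail 0 - ∫ t in (0:ℝ)..x, phi t := by
  rcases le_total 0 x with h | h
  · rw [Qtail_split h, intervalIntegral.integral_of_le h]; ring
  · rw [Qtail_split (a := x) (b := 0) h, intervalIntegral.integral_symm,
      intervalIntegral.integral_of_le h]
    ring

lemma continuous_Qtail : Continuous Qtail := by
  have : Qtail = fun x => Qtail 0 - ∫ t in (0:ℝ)..x, phi t := funext Qtail_eq
  rw [this]
  exact continuous_const.sub
    (intervalIntegral.continuous_primitive (fun a b => integrable_phi.intervalIntegrable) 0)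

lemma denom_pos (s : ℝ) : 0 < Qtail s * (1 - Qtail s) :=
  mul_pos (Qtail_pos s) (by linarith [Qtail_lt_one s])

lemma xi_pos (s : ℝ) : 0 < xi s := div_pos (pow_pos (phi_pos s) 2) (denom_pos s)

lemma xi_cont : Continuous xi :=
  (phi_cont.pow 2).div (continuous_Qtail.mul (continuous_const.sub continuous_Qtail))
    (fun s => (denom_pos s).ne')

lemma xi_even (s : ℝ) : xi (-s) = xi s := by
  unfold xi
  rw [phi_even, Qtail_neg]
  congr 1
  ring

lemma xi_le {x : ℝ} (hx : 1 ≤ x) : xi x ≤ 2 * Real.exp (3/2) * x * phi x := by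
  have hd := denom_pos x
  rw [xi, div_le_iff₀ hd]
  have h1 : Real.exp (-(3/2)) * phi x / x ≤ Qtail x := Qtail_lb hx
  have h2 : Qtail x ≤ 1/2 := Qtail_le_half (by linarith)
  have h3 := phi_pos x
  have hx0 : 0 < x := by linarith
  have he : Real.exp (-(3/2)) * Real.exp (3/2) = 1 := by
    rw [← Real.exp_add]; norm_num
  have h1' : Real.exp (-(3/2)) * phi x ≤ Qtail x * x := by
    rw [div_le_iff₀ hx0] at h1; linarith
  have hE := Real.exp_pos (3/2)
  have step1 : (Real.exp (-(3/2)) * phi x) * ((1 - Qtail x) * (2 * Real.exp (3/2) * phi x))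
      ≤ (Qtail x * x) * ((1 - Qtail x) * (2 * Real.exp (3/2) * phi x)) := by
    apply mul_le_mul_of_nonneg_right h1'
    have : (0:ℝ) ≤ 1 - Qtail x := by linarith [Qtail_lt_one x]
    positivity
  have step2 : phi x ^ 2 ≤ (Real.exp (-(3/2)) * phi x) * ((1 - Qtail x) * (2 * Real.exp (3/2) * phi x)) := by
    have hq : (1:ℝ)/2 ≤ 1 - Qtail x := by linarith
    have hrw : (Real.exp (-(3/2)) * phi x) * ((1 - Qtail x) * (2 * Real.exp (3/2) * phi x))
        = 2 * (1 - Qtail x) * (Real.exp (-(3/2)) * Real.exp (3/2)) * phi x ^ 2 := by ring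
    rw [hrw, he]
    nlinarith [sq_nonneg (phi x)]
  calc phi x ^ 2 ≤ _ := step2
    _ ≤ (Qtail x * x) * ((1 - Qtail x) * (2 * Real.exp (3/2) * phi x)) := step1
    _ = 2 * Real.exp (3/2) * x * phi x * (Qtail x * (1 - Qtail x)) := by ring

lemma integrable_abs_mul_phi : Integrable (fun x : ℝ => |x| * phi x) := by
  have h : Integrable (fun x : ℝ => x * Real.exp (-(1/2) * x ^ 2)) :=
    integrable_mul_exp_neg_mul_sq (by norm_num)
  have h2 := h.abs
  have e1 : (fun x : ℝ => |x * Real.exp (-(1/2) * x ^ 2)|)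
      = fun x => |x| * Real.exp (-(1/2) * x ^ 2) := by
    funext x; rw [abs_mul, abs_of_pos (Real.exp_pos _)]
  rw [e1] at h2
  have h3 := h2.const_mul ((Real.sqrt (2 * π))⁻¹)
  have e2 : ∀ x : ℝ, Real.exp (-(1/2) * x ^ 2) = Real.exp (-x ^ 2 / 2) := fun x => by
    rw [show -(1/2) * x ^ 2 = -x ^ 2 / 2 by ring]
  simp only [e2] at h3
  refine h3.congr (ae_of_all _ fun x => ?_)
  unfold phi
  ring

lemma integrable_exp_sq : Integrable (fun x : ℝ => Real.exp (-x ^ 2 / 2)) := by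
  have h : Integrable (fun x : ℝ => Real.exp (-(1/2) * x ^ 2)) :=
    integrable_exp_neg_mul_sq (by norm_num)
  have e2 : ∀ x : ℝ, Real.exp (-(1/2) * x ^ 2) = Real.exp (-x ^ 2 / 2) := fun x => by
    rw [show -(1/2) * x ^ 2 = -x ^ 2 / 2 by ring]
  simp only [e2] at h
  exact h

lemma integrable_xi : Integrable xi := by
  obtain ⟨z, hz, hzmax⟩ := isCompact_Icc.exists_isMaxOn
    (Set.nonempty_Icc.2 (by norm_num : (-1:ℝ) ≤ 1)) xi_cont.continuousOn
  set M := xi z with hM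
  have hMpos : 0 < M := xi_pos z
  have hg : Integrable (fun x : ℝ =>
      M * Real.exp (1/2) * Real.exp (-x ^ 2 / 2) + 2 * Real.exp (3/2) * (|x| * phi x)) :=
    (integrable_exp_sq.const_mul _).add (integrable_abs_mul_phi.const_mul _)
  refine hg.mono' xi_cont.aestronglyMeasurable (ae_of_all _ fun x => ?_)
  rw [Real.norm_eq_abs, abs_of_pos (xi_pos x)]
  have hterm2 : 0 ≤ 2 * Real.exp (3/2) * (|x| * phi x) :=
    mul_nonneg (by positivity) (mul_nonneg (abs_nonneg x) (phi_pos x).le)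
  have hterm1 : 0 ≤ M * Real.exp (1/2) * Real.exp (-x ^ 2 / 2) :=
    mul_nonneg (mul_nonneg hMpos.le (Real.exp_pos _).le) (Real.exp_pos _).le
  rcases le_total (|x|) 1 with h | h
  · have hmem : x ∈ Set.Icc (-1:ℝ) 1 := by
      rw [Set.mem_Icc]; constructor <;> [linarith [neg_abs_le x]; linarith [le_abs_self x]]
    have h1 : xi x ≤ M := hzmax hmem
    have h2 : (1:ℝ) ≤ Real.exp (1/2) * Real.exp (-x ^ 2 / 2) := by
      rw [← Real.exp_add]
      apply Real.one_le_exp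
      have hx2 : x ^ 2 ≤ 1 := by nlinarith [sq_abs x, abs_nonneg x]
      linarith
    nlinarith
  · have hb : xi x ≤ 2 * Real.exp (3/2) * |x| * phi x := by
      rcases le_total 0 x with hx | hx
      · rw [abs_of_nonneg hx]
        exact xi_le (by rwa [abs_of_nonneg hx] at h)
      · rw [abs_of_nonpos hx, ← xi_even x, ← phi_even x]
        exact xi_le (by rwa [abs_of_nonpos hx] at h)
    nlinarith

lemma zeta0_eq (r : ℝ) : zeta0 r = ∫ s, phi s * xi (r * s) := by
  unfold zeta0
  rw [ProbabilityTheory.gaussianReal_of_var_ne_zero 0 one_ne_zero]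
  have h0 : volume.withDensity (ProbabilityTheory.gaussianPDF 0 1)
      = volume.withDensity
        (fun x => ((ProbabilityTheory.gaussianPDFReal 0 1 x).toNNReal : ENNReal)) := rfl
  rw [h0, integral_withDensity_eq_integral_smul
    ((ProbabilityTheory.measurable_gaussianPDFReal 0 1).real_toNNReal) _]
  congr 1
  funext s
  rw [NNReal.smul_def, Real.coe_toNNReal _ (ProbabilityTheory.gaussianPDFReal_nonneg 0 1 s),
    ← phi_eq_pdf, smul_eq_mul]

lemma rzeta_eq {r : ℝ} (hr : 0 < r) : r * zeta0 r = ∫ u, xi u * phi (u / r) := by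
  rw [zeta0_eq]
  have h1 : (∫ s, phi s * xi (r * s)) = ∫ s, (fun u => xi u * phi (u / r)) (r * s) := by
    congr 1
    funext s
    simp only
    rw [mul_div_cancel_left₀ _ hr.ne', mul_comm]
  rw [h1, MeasureTheory.Measure.integral_comp_mul_left (fun u => xi u * phi (u / r)) r,
    abs_of_pos (inv_pos.2 hr), smul_eq_mul, ← mul_assoc, mul_inv_cancel₀ hr.ne', one_mul]

theorem stmt_13 :
    Integrable xi (volume : Measure ℝ) ∧
    Tendsto (fun r : ℝ => r * zeta0 r) atTop
      (nhds ((Real.sqrt (2 * π))⁻¹ * ∫ u, xi u)) := by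
  refine ⟨integrable_xi, ?_⟩
  have hphi0 : phi 0 = (Real.sqrt (2 * π))⁻¹ := by simp [phi]
  have hlim : Tendsto (fun r : ℝ => ∫ u, xi u * phi (u / r)) atTop
      (nhds (∫ u, xi u * phi 0)) := by
    apply tendsto_integral_filter_of_dominated_convergence
      (fun u => xi u * (Real.sqrt (2 * π))⁻¹)
    · exact Eventually.of_forall fun r =>
        (xi_cont.mul (phi_cont.comp (continuous_id.div_const r))).aestronglyMeasurable
    · refine Eventually.of_forall fun r => ae_of_all _ fun u => ?_
      rw [Real.norm_eq_abs, abs_mul, abs_of_pos (xi_pos u), abs_of_pos (phi_pos _)]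
      exact mul_le_mul_of_nonneg_left (phi_le _) (xi_pos u).le
    · exact integrable_xi.mul_const _
    · refine ae_of_all _ fun u => ?_
      have hdiv : Tendsto (fun r : ℝ => u / r) atTop (nhds 0) :=
        tendsto_const_nhds.div_atTop tendsto_id
      exact tendsto_const_nhds.mul ((phi_cont.tendsto 0).comp hdiv)
  have heq : ∀ᶠ r : ℝ in atTop, (fun r : ℝ => ∫ u, xi u * phi (u / r)) r = r * zeta0 r := by
    filter_upwards [eventually_gt_atTop 0] with r hr
    exact (rzeta_eq hr).symm
  have hfin : (∫ u, xi u * phi 0) = (Real.sqrt (2 * π))⁻¹ * ∫ u, xi u := by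
    rw [hphi0, integral_mul_const, mul_comm]
  rw [← hfin]
  exact hlim.congr' heq
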